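/- Step 1 of the three-point splitting identity: with a = [x<y], c = [x<y, x<z], d = [x<y, z<y] as partial orders on {x,y,z}, a partial order s on {x,y,z} is compatible with a if and only if s is compatible with c or s is compatible with d. -/

import Mathlib

/-- Two relations are compatible when the transitive closure of their union is
antisymmetric (i.e. the union is acyclic). -/
def Compatible {X : Type*} (r s : X → X → Prop) : Prop :=
  ∀ a b : X, Relation.TransGen (fun u v => r u v ∨ s u v) a b →
    Relation.TransGen (fun u v => r u v ∨ s u v) b a → a = b

open Classical in
/-- The compatibility pairing with values in a commutative semiring. -/
noncomputable def bracket {X : Type*} (S : Type*) [CommSemiring S]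
    (r s : X → X → Prop) : S :=
  if Compatible r s then 1 else 0

/-- `[x<y]`: the smallest partial order with `x < y`. -/
def relA {X : Type*} (x y : X) : X → X → Prop :=
  fun p q => p = q ∨ (p = x ∧ q = y)

/-- `[x<z<y]`: the smallest partial order with `x < z` and `z < y`. -/
def relB {X : Type*} (x y z : X) : X → X → Prop :=
  fun p q => p = q ∨ (p = x ∧ q = z) ∨ (p = z ∧ q = y) ∨ (p = x ∧ q = y)

/-- `[x<y, x<z]`: the smallest partial order with `x < y` and `x < z`. -/
def relC {X : Type*} (x y z : X) : X → X → Prop :=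
  fun p q => p = q ∨ (p = x ∧ q = y) ∨ (p = x ∧ q = z)

/-- `[x<y, z<y]`: the smallest partial order with `x < y` and `z < y`. -/
def relD {X : Type*} (x y z : X) : X → X → Prop :=
  fun p q => p = q ∨ (p = x ∧ q = y) ∨ (p = z ∧ q = y)


private lemma edge_split {X : Type*} {base : X → X → Prop} {u v a b : X}
    (h : Relation.TransGen (fun p q => base p q ∨ (p = u ∧ q = v)) a b) :
    Relation.ReflTransGen base a b ∨
      (Relation.ReflTransGen base a u ∧ Relation.ReflTransGen base v b) := by
  induction h with
  | single h =>
    rcases h with h | ⟨rfl, rfl⟩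
    · exact Or.inl (Relation.ReflTransGen.single h)
    · exact Or.inr ⟨Relation.ReflTransGen.refl, Relation.ReflTransGen.refl⟩
  | tail _ h ih =>
    rcases h with h | ⟨rfl, rfl⟩
    · rcases ih with ih | ⟨ih1, ih2⟩
      · exact Or.inl (ih.tail h)
      · exact Or.inr ⟨ih1, ih2.tail h⟩
    · rcases ih with ih | ⟨ih1, _⟩
      · exact Or.inr ⟨ih, Relation.ReflTransGen.refl⟩
      · exact Or.inr ⟨ih1, Relation.ReflTransGen.refl⟩

/-- If `base` is acyclic but adding the single edge `u → v` creates a cycle,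
then there is a `base`-path from `v` to `u`. -/
private lemma cycle_gives_path {X : Type*} {base : X → X → Prop} {u v : X}
    (hcomp : ∀ a b : X, Relation.TransGen base a b → Relation.TransGen base b a → a = b)
    (hbad : ¬ (∀ a b : X, Relation.TransGen (fun p q => base p q ∨ (p = u ∧ q = v)) a b →
        Relation.TransGen (fun p q => base p q ∨ (p = u ∧ q = v)) b a → a = b)) :
    Relation.ReflTransGen base v u := by
  push_neg at hbad
  obtain ⟨a, b, hab, hba, hne⟩ := hbad
  rcases edge_split hab with h1 | ⟨h1, h1'⟩ <;> rcases edge_split hba with h2 | ⟨h2, h2'⟩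
  · have t1 : Relation.TransGen base a b := by
      rcases h1.cases_head with rfl | ⟨c, hc, hcb⟩
      · exact absurd rfl hne
      · exact Relation.TransGen.head' hc hcb
    have t2 : Relation.TransGen base b a := by
      rcases h2.cases_head with rfl | ⟨c, hc, hca⟩
      · exact absurd rfl hne.symm
      · exact Relation.TransGen.head' hc hca
    exact absurd (hcomp a b t1 t2) hne
  · exact (h2'.trans h1).trans h2
  · exact (h1'.trans h2).trans h1
  · exact h1'.trans h2

theorem stmt8 {X : Type*} (x y z : X)
    (hxy : x ≠ y) (hxz : x ≠ z) (hyz : y ≠ z)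
    (hcover : ∀ w : X, w = x ∨ w = y ∨ w = z)
    (s : X → X → Prop) (hs : IsPartialOrder X s) :
    Compatible (relA x y) s ↔ (Compatible (relC x y z) s ∨ Compatible (relD x y z) s) := by
  constructor
  · intro hA
    by_contra hcd
    push_neg at hcd
    obtain ⟨hC, hD⟩ := hcd
    -- base relation
    set base : X → X → Prop := fun p q => relA x y p q ∨ s p q with hbase
    have hCequiv : ∀ a b, Relation.TransGen (fun p q => relC x y z p q ∨ s p q) a b ↔
        Relation.TransGen (fun p q => base p q ∨ (p = x ∧ q = z)) a b := by
      intro a b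
      constructor <;> intro h <;> refine Relation.TransGen.mono ?_ _ _ h <;> intro p q hpq <;>
        simp only [relC, relA, hbase] at * <;> tauto
    have hDequiv : ∀ a b, Relation.TransGen (fun p q => relD x y z p q ∨ s p q) a b ↔
        Relation.TransGen (fun p q => base p q ∨ (p = z ∧ q = y)) a b := by
      intro a b
      constructor <;> intro h <;> refine Relation.TransGen.mono ?_ _ _ h <;> intro p q hpq <;>
        simp only [relD, relA, hbase] at * <;> tauto
    have hzx : Relation.ReflTransGen base z x := by
      refine cycle_gives_path hA ?_
      intro hcon
      exact hC (fun a b h1 h2 => hcon a b ((hCequiv a b).mp h1) ((hCequiv b a).mp h2))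
    have hyz' : Relation.ReflTransGen base y z := by
      refine cycle_gives_path hA ?_
      intro hcon
      exact hD (fun a b h1 h2 => hcon a b ((hDequiv a b).mp h1) ((hDequiv b a).mp h2))
    have hyx : Relation.TransGen base y x := by
      have := hyz'.trans hzx
      rcases this.cases_head with rfl | ⟨c, hc, hcx⟩
      · exact absurd rfl hxy.symm
      · exact Relation.TransGen.head' hc hcx
    have hxy' : Relation.TransGen base x y :=
      Relation.TransGen.single (Or.inl (Or.inr ⟨rfl, rfl⟩))
    exact hxy (hA x y hxy' hyx)
  · rintro (hC | hC) <;>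
    · intro a b h1 h2
      refine hC a b (Relation.TransGen.mono ?_ _ _ h1) (Relation.TransGen.mono ?_ _ _ h2) <;> intro p q hpq <;>
        simp only [relA, relC, relD] at * <;> tauto
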